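/- Let H ∈ ℝ^{N×N} be symmetric positive definite and let Q ∈ ℝ^{N×N} satisfy Q + Qᵀ = e_N e_Nᵀ − e_1 e_1ᵀ. Let σ < −1/2 and set γ = 2σ + 1 and Γ = −σ/γ. Let G : [0,T] → ℝ be continuous and let u : [0,T] → ℝ^N be differentiable and satisfy the SBP–SAT semi-discretization u'(t) = −H⁻¹ Q u(t) + σ H⁻¹ ( e_1 e_1ᵀ u(t) − G(t) e_1 ) for all t ∈ [0,T]. Then u(T)ᵀ H u(T) ≤ u(0)ᵀ H u(0) − γ Γ² ∫₀ᵀ G(t)² dt. In particular, for the conservative choice σ = −1, u(T)ᵀ H u(T) ≤ u(0)ᵀ H u(0) + ∫₀ᵀ G(t)² dt, mimicking the continuous energy estimate term by term. -/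

import Mathlib

open Matrix intervalIntegral

/-- **Energy estimate for the SBP–SAT semi-discretization of linear advection.**
Given a symmetric positive definite norm matrix `H` and an almost-skew-symmetric
`Q` with `Q + Qᵀ = e_N e_Nᵀ − e_1 e_1ᵀ`, any solution of the SBP–SAT ODE
`u' = −H⁻¹ Q u + σ H⁻¹ (e_1 e_1ᵀ u − G e_1)` with SAT parameter `σ < −1/2`
satisfies the discrete energy estimate
`u(T)ᵀ H u(T) ≤ u(0)ᵀ H u(0) − γ Γ² ∫₀ᵀ G²`, with `γ = 2σ+1`, `Γ = −σ/γ`;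
in particular for `σ = −1` one gets `u(T)ᵀ H u(T) ≤ u(0)ᵀ H u(0) + ∫₀ᵀ G²`. -/
theorem sbp_sat_energy_estimate
    {N : ℕ} (hN : 0 < N) (T : ℝ) (hT : 0 < T)
    (H Q : Matrix (Fin N) (Fin N) ℝ) (hH : H.PosDef)
    (e1 eN : Fin N → ℝ)
    (he1 : e1 = Pi.single (⟨0, hN⟩ : Fin N) 1)
    (heN : eN = Pi.single (⟨N - 1, by omega⟩ : Fin N) 1)
    (hQ : Q + Qᵀ = vecMulVec eN eN - vecMulVec e1 e1)
    (σ γ Γ : ℝ) (hσ : σ < -(1/2)) (hγ : γ = 2 * σ + 1) (hΓ : Γ = -σ / γ)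
    (G : ℝ → ℝ) (hG : ContinuousOn G (Set.Icc 0 T))
    (u u' : ℝ → Fin N → ℝ)
    (hu : ∀ t ∈ Set.Icc (0:ℝ) T, HasDerivAt u (u' t) t)
    (hode : ∀ t ∈ Set.Icc (0:ℝ) T,
      u' t = -((H⁻¹ * Q) *ᵥ u t)
        + σ • (H⁻¹ *ᵥ ((vecMulVec e1 e1) *ᵥ u t - G t • e1))) :
    (u T ⬝ᵥ (H *ᵥ u T) ≤ u 0 ⬝ᵥ (H *ᵥ u 0) - γ * Γ ^ 2 * ∫ t in (0:ℝ)..T, G t ^ 2)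
    ∧ (σ = -1 →
        u T ⬝ᵥ (H *ᵥ u T) ≤ u 0 ⬝ᵥ (H *ᵥ u 0) + ∫ t in (0:ℝ)..T, G t ^ 2) := by
  have hγ0 : γ < 0 := by rw [hγ]; linarith
  have hγne : γ ≠ 0 := ne_of_lt hγ0
  have hγΓ : γ * Γ = -σ := by rw [hΓ]; field_simp
  have hHH : H * H⁻¹ = 1 := Matrix.mul_nonsing_inv H ((Matrix.isUnit_iff_isUnit_det H).mp hH.isUnit)
  have hHsymm : Hᵀ = H := by
    have := hH.isHermitian.eq
    simpa using this
  set i1 : Fin N := ⟨0, hN⟩ with hi1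
  set iN : Fin N := ⟨N - 1, by omega⟩ with hiN
  -- coordinatewise derivatives
  have hcoord : ∀ t ∈ Set.Icc (0:ℝ) T, ∀ i, HasDerivAt (fun s => u s i) (u' t i) t := by
    intro t ht i
    exact ((ContinuousLinearMap.proj i).hasFDerivAt.comp_hasDerivAt t (hu t ht))
  -- derivative of the energy
  have hE : ∀ t ∈ Set.Icc (0:ℝ) T,
      HasDerivAt (fun s => u s ⬝ᵥ (H *ᵥ u s))
        (u' t ⬝ᵥ (H *ᵥ u t) + u t ⬝ᵥ (H *ᵥ u' t)) t := by
    intro t ht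
    have h1 : HasDerivAt (fun s => ∑ i, u s i * ∑ j, H i j * u s j)
        (∑ i, (u' t i * ∑ j, H i j * u t j + u t i * ∑ j, H i j * u' t j)) t := by
      apply HasDerivAt.fun_sum
      intro i _
      exact (hcoord t ht i).mul (HasDerivAt.fun_sum fun j _ => (hcoord t ht j).const_mul (H i j))
    have hfun : (fun s => u s ⬝ᵥ (H *ᵥ u s)) = fun s => ∑ i, u s i * ∑ j, H i j * u s j := by
      funext s; simp [dotProduct, mulVec]
    rw [hfun]
    convert h1 using 1
    simp [dotProduct, mulVec, Finset.sum_add_distrib]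
  -- key pointwise identity
  have hkey : ∀ t ∈ Set.Icc (0:ℝ) T,
      u' t ⬝ᵥ (H *ᵥ u t) + u t ⬝ᵥ (H *ᵥ u' t)
        = -(u t iN)^2 + γ * (u t i1)^2 - 2*σ * G t * u t i1 := by
    intro t ht
    have hsymdot : ∀ v w : Fin N → ℝ, v ⬝ᵥ (H *ᵥ w) = w ⬝ᵥ (H *ᵥ v) := by
      intro v w
      rw [Matrix.dotProduct_mulVec, ← Matrix.mulVec_transpose, hHsymm, dotProduct_comm]
    have hHu' : H *ᵥ u' t = -(Q *ᵥ u t) + σ • ((vecMulVec e1 e1) *ᵥ u t - G t • e1) := by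
      rw [hode t ht]
      rw [Matrix.mulVec_add, Matrix.mulVec_neg, Matrix.mulVec_smul,
        Matrix.mulVec_mulVec, Matrix.mulVec_mulVec, ← Matrix.mul_assoc, hHH, one_mul,
        Matrix.one_mulVec]
    have hQsym : u t ⬝ᵥ (Qᵀ *ᵥ u t) = u t ⬝ᵥ (Q *ᵥ u t) := by
      rw [Matrix.dotProduct_mulVec, ← Matrix.mulVec_transpose, Matrix.transpose_transpose,
        dotProduct_comm]
    have hvmv : ∀ (a b v : Fin N → ℝ), (vecMulVec a b) *ᵥ v = (b ⬝ᵥ v) • a := by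
      intro a b v
      funext i
      simp only [Matrix.mulVec, vecMulVec_apply, dotProduct, Pi.smul_apply, smul_eq_mul,
        Finset.sum_mul]
      exact Finset.sum_congr rfl fun j _ => by ring
    have h1 : u t ⬝ᵥ ((vecMulVec e1 e1) *ᵥ u t) = (u t i1)^2 := by
      rw [hvmv, dotProduct_smul, he1, single_dotProduct, dotProduct_single, smul_eq_mul]
      ring
    have h2 : u t ⬝ᵥ ((vecMulVec eN eN) *ᵥ u t) = (u t iN)^2 := by
      rw [hvmv, dotProduct_smul, heN, single_dotProduct, dotProduct_single, smul_eq_mul]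
      ring
    have hQQ : u t ⬝ᵥ ((Q + Qᵀ) *ᵥ u t) = (u t iN)^2 - (u t i1)^2 := by
      rw [hQ, Matrix.sub_mulVec, dotProduct_sub, h1, h2]
    have hQu : u t ⬝ᵥ (Q *ᵥ u t) = ((u t iN)^2 - (u t i1)^2) / 2 := by
      have : u t ⬝ᵥ ((Q + Qᵀ) *ᵥ u t) = 2 * (u t ⬝ᵥ (Q *ᵥ u t)) := by
        rw [Matrix.add_mulVec, dotProduct_add, hQsym]; ring
      rw [this] at hQQ; linarith
    have hsat : u t ⬝ᵥ ((vecMulVec e1 e1) *ᵥ u t - G t • e1)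
        = (u t i1)^2 - G t * u t i1 := by
      rw [dotProduct_sub, h1, dotProduct_smul, he1, dotProduct_single, mul_one, smul_eq_mul]
    rw [hsymdot (u' t) (u t), hHu']
    rw [dotProduct_add, dotProduct_neg, dotProduct_smul, hQu, hsat]
    simp only [smul_eq_mul]
    rw [hγ]; ring
  -- the auxiliary function
  set F : ℝ → ℝ := fun t => u t ⬝ᵥ (H *ᵥ u t) + γ * Γ^2 * ∫ s in (0:ℝ)..t, (G s)^2 with hF
  have hG2 : ContinuousOn (fun s => (G s)^2) (Set.Icc 0 T) := (hG.pow 2)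
  have hG2int : MeasureTheory.IntegrableOn (fun s => (G s)^2) (Set.uIcc 0 T) := by
    rw [Set.uIcc_of_le hT.le]; exact hG2.integrableOn_Icc
  have hFcont : ContinuousOn F (Set.Icc 0 T) := by
    apply ContinuousOn.add
    · intro t ht
      exact (hE t ht).continuousAt.continuousWithinAt
    · have := (intervalIntegral.continuousOn_primitive_interval hG2int).const_smul (γ * Γ^2)
      rw [Set.uIcc_of_le hT.le] at this
      simpa [Pi.smul_def, smul_eq_mul] using this
  have hFderiv : ∀ x ∈ Set.Ioo (0:ℝ) T,
      HasDerivAt F (u' x ⬝ᵥ (H *ᵥ u x) + u x ⬝ᵥ (H *ᵥ u' x) + γ * Γ^2 * (G x)^2) x := by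
    intro x hx
    have hx' : x ∈ Set.Icc (0:ℝ) T := Set.Ioo_subset_Icc_self hx
    have hint : IntervalIntegrable (fun s => (G s)^2) MeasureTheory.volume 0 x := by
      apply hG2int.intervalIntegrable.mono_set
      rw [Set.uIcc_of_le hT.le, Set.uIcc_of_le hx.1.le]
      exact Set.Icc_subset_Icc le_rfl hx.2.le
    have hcontAt : ∀ y ∈ Set.Ioo (0:ℝ) T, ContinuousAt (fun s => (G s)^2) y := by
      intro y hy
      exact (hG2.continuousAt (Icc_mem_nhds hy.1 hy.2))
    have hmeas : StronglyMeasurableAtFilter (fun s => (G s)^2) (nhds x) MeasureTheory.volume :=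
      ContinuousAt.stronglyMeasurableAtFilter isOpen_Ioo hcontAt x hx
    have hI := intervalIntegral.integral_hasDerivAt_right hint hmeas (hcontAt x hx)
    exact ((hE x hx').add ((hI.const_mul (γ * Γ^2))))
  have hAnti : AntitoneOn F (Set.Icc 0 T) := by
    apply antitoneOn_of_deriv_nonpos (convex_Icc 0 T) hFcont
    · rw [interior_Icc]
      intro x hx
      exact (hFderiv x hx).differentiableAt.differentiableWithinAt
    · rw [interior_Icc]
      intro x hx
      rw [(hFderiv x hx).deriv]
      rw [hkey x (Set.Ioo_subset_Icc_self hx)]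
      have hsq : γ * (u x i1 + Γ * G x)^2 ≤ 0 :=
        mul_nonpos_of_nonpos_of_nonneg hγ0.le (sq_nonneg _)
      have hexp : γ * (u x i1 + Γ * G x)^2
          = γ * u x i1 ^ 2 - 2 * σ * G x * u x i1 + γ * Γ^2 * G x ^ 2 := by
        have h : γ * (u x i1 + Γ * G x)^2
            = γ * u x i1 ^ 2 + 2 * (γ * Γ) * G x * u x i1 + γ * Γ^2 * G x ^ 2 := by ring
        rw [h, hγΓ]; ring
      nlinarith [sq_nonneg (u x iN), hsq, hexp]
  have hmain : u T ⬝ᵥ (H *ᵥ u T) ≤ u 0 ⬝ᵥ (H *ᵥ u 0) - γ * Γ ^ 2 * ∫ t in (0:ℝ)..T, G t ^ 2 := by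
    have := hAnti (Set.left_mem_Icc.mpr hT.le) (Set.right_mem_Icc.mpr hT.le) hT.le
    simp only [hF] at this
    rw [intervalIntegral.integral_same] at this
    linarith
  refine ⟨hmain, fun hσ1 => ?_⟩
  have : γ = -1 := by rw [hγ, hσ1]; ring
  have hΓ1 : Γ = -1 := by rw [hΓ, hσ1, this]; norm_num
  calc u T ⬝ᵥ (H *ᵥ u T) ≤ u 0 ⬝ᵥ (H *ᵥ u 0) - γ * Γ ^ 2 * ∫ t in (0:ℝ)..T, G t ^ 2 := hmain
    _ = u 0 ⬝ᵥ (H *ᵥ u 0) + ∫ t in (0:ℝ)..T, G t ^ 2 := by rw [this, hΓ1]; ring
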